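/- Fix integers m ≥ 2, n ≥ 1, a real number α > 1, a probability distribution P with full support on 𝒳, set θ = m^n · min_{x∈𝒳} P(x), and let D be a real number with 0 < D < n. Then every (P,D)-valid mechanism Q satisfies I_α(P,Q) ≥ ((α−n)/(α−1))·log m + (α/(α−1))·log( (1 − D/n) / ( (1/2)(1−θ)(n+1)m + θ ) ). -/

import Mathlib

open Finset Real

lemma card_filter_eval {m n : ℕ} (i : Fin n) (v : Fin m) :
    (Finset.univ.filter fun x : Fin n → Fin m => x i = v).card = m ^ (n-1) := by
  have hmpos : 0 < m := Fin.pos v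
  have e : (Fin n → Fin m) ≃ {x : Fin n → Fin m // x i = v} × Fin m :=
    { toFun := fun x => (⟨Function.update x i v, Function.update_self i v x⟩, x i)
      invFun := fun z => Function.update z.1.1 i z.2
      left_inv := fun x => by simp [Function.update_idem]
      right_inv := fun z => by
        obtain ⟨⟨a, ha⟩, c⟩ := z
        refine Prod.ext ?_ ?_
        · apply Subtype.ext
          simp only [Function.update_idem]
          rw [← ha]
          exact Function.update_eq_self i a
        · exact Function.update_self i c a }
  have h1 := Fintype.card_congr e
  rw [Fintype.card_prod, Fintype.card_fun, Fintype.card_fin, Fintype.card_fin,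
    Fintype.card_subtype] at h1
  have hn : n - 1 + 1 = n := Nat.succ_pred_eq_of_pos i.pos
  have h2 : m ^ (n-1) * m = (Finset.univ.filter fun x : Fin n → Fin m => x i = v).card * m := by
    rw [← pow_succ, hn, h1]
  exact (Nat.eq_of_mul_eq_mul_right hmpos h2).symm

lemma card_filter_eval_not {m n : ℕ} (i : Fin n) (v : Fin m) :
    (Finset.univ.filter fun x : Fin n → Fin m => ¬ x i = v).card = m ^ n - m ^ (n-1) := by
  have h := Finset.card_filter_add_card_filter_not
    (s := (Finset.univ : Finset (Fin n → Fin m))) (fun x => x i = v)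
  have hcX : Fintype.card (Fin n → Fin m) = m ^ n := by
    rw [Fintype.card_fun, Fintype.card_fin, Fintype.card_fin]
  rw [card_filter_eval i v, Finset.card_univ, hcX] at h
  have h2 : (Finset.univ.filter fun a : Fin n → Fin m => ¬(fun x : Fin n → Fin m => x i = v) a)
      = Finset.univ.filter fun x : Fin n → Fin m => ¬ x i = v := rfl
  rw [h2] at h
  exact Nat.eq_sub_of_add_eq' h

lemma jensen_aux {ι : Type*} (s : Finset ι) (w z : ι → ℝ) (hw : ∀ j ∈ s, 0 ≤ w j)
    (hz : ∀ j ∈ s, 0 ≤ z j) {α : ℝ} (hα : 1 ≤ α) {T : ℝ} (hT : ∑ j ∈ s, w j = T)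
    (hT0 : 0 < T) :
    ∑ j ∈ s, w j * z j ≤ T ^ (1 - 1/α) * (∑ j ∈ s, w j * z j ^ α) ^ (1/α) := by
  set S := ∑ j ∈ s, w j * z j ^ α with hS
  have hS0 : 0 ≤ S := Finset.sum_nonneg fun j hj =>
    mul_nonneg (hw j hj) (Real.rpow_nonneg (hz j hj) α)
  have key := Real.arith_mean_le_rpow_mean s (fun j => w j / T) z
    (fun j hj => div_nonneg (hw j hj) hT0.le)
    (by rw [← Finset.sum_div, hT, div_self hT0.ne']) hz hα
  have hL : ∑ j ∈ s, (w j / T) * z j = (∑ j ∈ s, w j * z j) / T := by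
    rw [Finset.sum_div]; exact Finset.sum_congr rfl fun j _ => by ring
  have hR : ∑ j ∈ s, (w j / T) * z j ^ α = S / T := by
    rw [hS, Finset.sum_div]; exact Finset.sum_congr rfl fun j _ => by ring
  rw [hL, hR] at key
  have key2 : ∑ j ∈ s, w j * z j ≤ T * (S / T) ^ (1/α) := by
    rw [← div_le_iff₀' hT0] at *
    · exact key
  calc ∑ j ∈ s, w j * z j ≤ T * (S / T) ^ (1/α) := key2
    _ = T ^ (1 - 1/α) * S ^ (1/α) := by
        rw [Real.div_rpow hS0 hT0.le, Real.rpow_sub hT0, Real.rpow_one]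
        ring

set_option maxHeartbeats 1000000 in
/-- let `α > 1`, `P` a full-support distribution on `𝒳 = Fin n → Fin m`,
`θ = m^n · min_x P(x)` and `0 < D < n`. Every `(P,D)`-valid mechanism `Q` satisfies
`I_α(P,Q) ≥ ((α-n)/(α-1)) log m + (α/(α-1)) log((1 - D/n)/((1/2)(1-θ)(n+1)m + θ))`,
where `I_α(P,Q) = (α/(α-1)) log Σ_y (Σ_x P(x) Q(y|x)^α)^{1/α}` is the Sibson mutual
information. -/
theorem stmt_10 (m n : ℕ) (hm : 2 ≤ m) (hn : 1 ≤ n)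
    (α : ℝ) (hα : 1 < α)
    (P : (Fin n → Fin m) → ℝ) (hPpos : ∀ x, 0 < P x) (hPsum : ∑ x, P x = 1)
    (θ : ℝ) (hθ : θ = (m : ℝ) ^ n * (⨅ x, P x))
    (D : ℝ) (hD0 : 0 < D) (hDn : D < n)
    (Q : (Fin n → Fin m) → (Fin n → Fin m) → ℝ)
    (hQ0 : ∀ x y, 0 ≤ Q x y) (hQ1 : ∀ x, ∑ y, Q x y = 1)
    (hvalid : ∑ x, ∑ y, P x * Q x y * (hammingDist x y : ℝ) ≤ D) :
    α / (α - 1) * Real.log (∑ y : Fin n → Fin m, (∑ x, P x * Q x y ^ α) ^ (1 / α)) ≥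
      (α - n) / (α - 1) * Real.log m +
        α / (α - 1) *
          Real.log ((1 - D / n) / ((1 / 2) * (1 - θ) * ((n : ℝ) + 1) * m + θ)) := by
  -- basic numeric facts
  have hα0 : (0:ℝ) < α := lt_trans one_pos hα
  have hα1 : (0:ℝ) < α - 1 := sub_pos.mpr hα
  have hmR : (2:ℝ) ≤ (m:ℝ) := by exact_mod_cast hm
  have hm0 : (0:ℝ) < (m:ℝ) := by linarith
  have hm1 : (1:ℝ) ≤ (m:ℝ) := by linarith
  have hnR : (1:ℝ) ≤ (n:ℝ) := by exact_mod_cast hn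
  have hn0 : (0:ℝ) < (n:ℝ) := by linarith
  have hne : Nonempty (Fin n → Fin m) := ⟨fun _ => ⟨0, by omega⟩⟩
  -- minimum of P
  obtain ⟨x₀, hx₀⟩ := Finite.exists_min P
  have hinf : (⨅ x, P x) = P x₀ :=
    le_antisymm (ciInf_le (Finite.bddBelow_range P) x₀) (le_ciInf hx₀)
  set c := P x₀ with hc
  have hc0 : 0 < c := hPpos x₀
  have hθc : θ = (m:ℝ)^n * c := by rw [hθ, hinf]
  have hθ0 : 0 < θ := by rw [hθc]; positivity
  have hcardX : Fintype.card (Fin n → Fin m) = m ^ n := by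
    rw [Fintype.card_fun, Fintype.card_fin, Fintype.card_fin]
  have hθ1 : θ ≤ 1 := by
    have h1 : ∑ _x : Fin n → Fin m, c ≤ ∑ x, P x := Finset.sum_le_sum fun x _ => hx₀ x
    rw [Finset.sum_const, Finset.card_univ, hcardX, nsmul_eq_mul, hPsum] at h1
    rw [hθc]; exact_mod_cast h1
  -- the per-coordinate error
  set e : Fin n → ℝ := fun i => ∑ x, ∑ y, (if x i = y i then 0 else P x * Q x y) with he
  have hesum : ∑ i, e i ≤ D := by
    have hxy : ∀ x y : Fin n → Fin m,
        ∑ i, (if x i = y i then (0:ℝ) else P x * Q x y)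
          = P x * Q x y * (hammingDist x y : ℝ) := by
      intro x y
      rw [hammingDist, Finset.natCast_card_filter, Finset.mul_sum]
      exact Finset.sum_congr rfl fun i _ => by by_cases h : x i = y i <;> simp [h]
    calc ∑ i, e i = ∑ x, ∑ i, ∑ y, (if x i = y i then (0:ℝ) else P x * Q x y) :=
          Finset.sum_comm
      _ = ∑ x, ∑ y, ∑ i, (if x i = y i then (0:ℝ) else P x * Q x y) :=
          Finset.sum_congr rfl fun x _ => Finset.sum_comm
      _ = ∑ x, ∑ y, P x * Q x y * (hammingDist x y : ℝ) :=
          Finset.sum_congr rfl fun x _ => Finset.sum_congr rfl fun y _ => hxy x y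
      _ ≤ D := hvalid
  have hex : ∃ i : Fin n, e i ≤ D / n := by
    by_contra h
    push_neg at h
    have h2 : ∑ _i : Fin n, D / n < ∑ i, e i :=
      Finset.sum_lt_sum_of_nonempty (univ_nonempty_iff.mpr ⟨⟨0, by omega⟩⟩) fun i _ => h i
    rw [Finset.sum_const, Finset.card_univ, Fintype.card_fin, nsmul_eq_mul] at h2
    rw [mul_div_cancel₀ D hn0.ne'] at h2
    linarith
  obtain ⟨i, hi⟩ := hex
  -- constants
  set p : ℝ := 1 - (1 - 1/(m:ℝ)) * θ with hp
  have hp0 : 0 < p := by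
    have h1 : 0 < θ / m := div_pos hθ0 hm0
    have h2 : p = (1-θ) + θ/m := by rw [hp]; field_simp; ring
    rw [h2]; nlinarith
  set K : ℝ := (1 / 2) * (1 - θ) * ((n : ℝ) + 1) * (m:ℝ) + θ with hK
  have hK1 : 1 ≤ K := by
    have h6 : (0:ℝ) ≤ ((n:ℝ)+1)*(m:ℝ)/2 - 1 := by nlinarith
    have h7 : (0:ℝ) ≤ 1-θ := by linarith
    have h8 := mul_nonneg h7 h6
    rw [hK]; nlinarith [h8]
  have hmp : (m:ℝ) * p = (m:ℝ) - ((m:ℝ)-1) * θ := by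
    rw [hp]
    have hminv : (m:ℝ) * (1/(m:ℝ)) = 1 := by
      field_simp
    nlinarith [hminv]
  have hKp : (m:ℝ) * p ≤ K := by
    have h6 : (0:ℝ) ≤ (1-θ) * (((n:ℝ)-1)*(m:ℝ)/2) :=
      mul_nonneg (by linarith) (by nlinarith)
    rw [hmp, hK]; nlinarith [h6]
  -- S y and its positivity facts
  set S : (Fin n → Fin m) → ℝ := fun y => ∑ x, P x * Q x y ^ α with hS
  have hS0 : ∀ y, 0 ≤ S y := fun y => Finset.sum_nonneg fun x _ =>
    mul_nonneg (hPpos x).le (Real.rpow_nonneg (hQ0 x y) α)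
  -- key per-y inequality
  have key : ∀ y : Fin n → Fin m,
      ∑ x ∈ Finset.univ.filter (fun x => x i = y i), P x * Q x y
        ≤ p ^ (1 - 1/α) * (S y) ^ (1/α) := by
    intro y
    set A := Finset.univ.filter (fun x : Fin n → Fin m => x i = y i) with hA
    set T := ∑ x ∈ A, P x with hT
    have hyA : y ∈ A := by simp [hA]
    have hT0 : 0 < T :=
      lt_of_lt_of_le (hPpos y) (Finset.single_le_sum (fun x _ => (hPpos x).le) hyA)
    have hTle : T ≤ p := by
      have hsplit : T + ∑ x ∈ Finset.univ.filter (fun x : Fin n → Fin m => ¬ x i = y i), P x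
          = 1 := by
        rw [hT, hA, Finset.sum_filter_add_sum_filter_not, hPsum]
      have hlow : ((Finset.univ.filter (fun x : Fin n → Fin m => ¬ x i = y i)).card : ℝ) * c
          ≤ ∑ x ∈ Finset.univ.filter (fun x : Fin n → Fin m => ¬ x i = y i), P x := by
        calc ((Finset.univ.filter (fun x : Fin n → Fin m => ¬ x i = y i)).card : ℝ) * c
            = ∑ _x ∈ Finset.univ.filter (fun x : Fin n → Fin m => ¬ x i = y i), c := by
              rw [Finset.sum_const, nsmul_eq_mul]
          _ ≤ _ := Finset.sum_le_sum fun x _ => hx₀ x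
      rw [card_filter_eval_not i (y i)] at hlow
      have hcast : (((m:ℕ) ^ n - m ^ (n-1) : ℕ) : ℝ) = (m:ℝ)^n - (m:ℝ)^(n-1) := by
        have hle : m ^ (n-1) ≤ m ^ n := Nat.pow_le_pow_right (by omega) (by omega)
        push_cast [Nat.cast_sub hle]
        ring
      rw [hcast] at hlow
      have hkey2 : (1 - 1/(m:ℝ)) * θ = ((m:ℝ)^n - (m:ℝ)^(n-1)) * c := by
        have hpow : (m:ℝ)^(n-1) * (m:ℝ) = (m:ℝ)^n := by
          rw [← pow_succ, show n - 1 + 1 = n from by omega]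
        rw [hθc, ← hpow]
        field_simp
      rw [hp, hkey2]
      linarith
    have hjen := jensen_aux A P (fun x => Q x y) (fun x _ => (hPpos x).le)
      (fun x _ => hQ0 x y) hα.le hT.symm hT0
    have hAle : ∑ x ∈ A, P x * Q x y ^ α ≤ S y := by
      rw [hS]
      exact Finset.sum_le_sum_of_subset_of_nonneg (Finset.filter_subset _ _)
        (fun x _ _ => mul_nonneg (hPpos x).le (Real.rpow_nonneg (hQ0 x y) α))
    have h1a : (0:ℝ) ≤ 1 - 1/α := by
      rw [sub_nonneg, div_le_one hα0]; linarith
    calc ∑ x ∈ A, P x * Q x y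
        ≤ T ^ (1 - 1/α) * (∑ x ∈ A, P x * Q x y ^ α) ^ (1/α) := hjen
      _ ≤ p ^ (1 - 1/α) * (S y) ^ (1/α) := by
          apply mul_le_mul
          · exact Real.rpow_le_rpow hT0.le hTle h1a
          · exact Real.rpow_le_rpow (Finset.sum_nonneg fun x _ =>
              mul_nonneg (hPpos x).le (Real.rpow_nonneg (hQ0 x y) α)) hAle (by positivity)
          · exact Real.rpow_nonneg (Finset.sum_nonneg fun x _ =>
              mul_nonneg (hPpos x).le (Real.rpow_nonneg (hQ0 x y) α)) _
          · exact Real.rpow_nonneg hp0.le _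
  -- sum the key inequality over y
  set Sig : ℝ := ∑ y : Fin n → Fin m, (S y) ^ (1/α) with hSig
  have hsum_eq : ∑ y : Fin n → Fin m,
      ∑ x ∈ Finset.univ.filter (fun x => x i = y i), P x * Q x y = 1 - e i := by
    have h1 : ∑ y : Fin n → Fin m, ∑ x ∈ Finset.univ.filter (fun x => x i = y i), P x * Q x y
        = ∑ x : Fin n → Fin m, ∑ y : Fin n → Fin m,
            (if x i = y i then P x * Q x y else 0) := by
      rw [Finset.sum_comm]
      exact Finset.sum_congr rfl fun y _ => by rw [Finset.sum_filter]
    rw [h1, he]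
    have h2 : (1:ℝ) = ∑ x : Fin n → Fin m, ∑ y : Fin n → Fin m, P x * Q x y := by
      rw [← hPsum]
      exact Finset.sum_congr rfl fun x _ => by rw [← Finset.mul_sum, hQ1 x, mul_one]
    rw [h2, ← Finset.sum_sub_distrib]
    refine Finset.sum_congr rfl fun x _ => ?_
    rw [← Finset.sum_sub_distrib]
    refine Finset.sum_congr rfl fun y _ => ?_
    by_cases h : x i = y i <;> simp [h]
  have hmain : 1 - D/n ≤ p ^ (1 - 1/α) * Sig := by
    have h3 : ∑ y : Fin n → Fin m,
        ∑ x ∈ Finset.univ.filter (fun x => x i = y i), P x * Q x y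
        ≤ ∑ y : Fin n → Fin m, p ^ (1 - 1/α) * (S y) ^ (1/α) :=
      Finset.sum_le_sum fun y _ => key y
    rw [hsum_eq, ← Finset.mul_sum] at h3
    calc 1 - D/n ≤ 1 - e i := by linarith
      _ ≤ p ^ (1 - 1/α) * Sig := h3
  -- numeric positivity
  have hDn' : 0 < 1 - D/n := by
    have : D/n < 1 := (div_lt_one hn0).mpr hDn
    linarith
  have hpt0 : 0 < p ^ (1 - 1/α) := Real.rpow_pos_of_pos hp0 _
  have hSge : (1 - D/n) / p ^ (1 - 1/α) ≤ Sig := by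
    rw [div_le_iff₀ hpt0]
    calc 1 - D/n ≤ p ^ (1 - 1/α) * Sig := hmain
      _ = Sig * p ^ (1 - 1/α) := by ring
  have hS0' : 0 < Sig := lt_of_lt_of_le (div_pos hDn' hpt0) hSge
  have hK0 : (0:ℝ) < K := by linarith
  -- log facts
  have hlog1 : Real.log ((1 - D/n) / p ^ (1 - 1/α))
      = Real.log (1 - D/n) - (1 - 1/α) * Real.log p := by
    rw [Real.log_div hDn'.ne' hpt0.ne', Real.log_rpow hp0]
  have hlogS : Real.log (1 - D/n) - (1 - 1/α) * Real.log p ≤ Real.log Sig := by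
    rw [← hlog1]
    exact Real.log_le_log (div_pos hDn' hpt0) hSge
  have hlogm : 0 ≤ Real.log (m:ℝ) := Real.log_nonneg hm1
  have hlogK : 0 ≤ Real.log K := Real.log_nonneg hK1
  have hlogp_le : Real.log p ≤ Real.log K - Real.log (m:ℝ) := by
    have h4 : p ≤ K / m := by rw [le_div_iff₀ hm0]; linarith [hKp]
    calc Real.log p ≤ Real.log (K / m) := Real.log_le_log hp0 h4
      _ = Real.log K - Real.log (m:ℝ) := Real.log_div hK0.ne' hm0.ne'
  set t : ℝ := 1 - 1/α with ht
  have ht0 : 0 ≤ t := by rw [ht, sub_nonneg, div_le_one hα0]; linarith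
  have ht1 : t ≤ 1 := by
    have : 0 < 1/α := by positivity
    rw [ht]; linarith
  have hstep : (1 - (n:ℝ)/α) * Real.log (m:ℝ) ≤ Real.log K - t * Real.log p := by
    have h1 : t * Real.log p ≤ t * (Real.log K - Real.log (m:ℝ)) :=
      mul_le_mul_of_nonneg_left hlogp_le ht0
    have h2 : 0 ≤ (1-t) * (Real.log K + ((n:ℝ)-1) * Real.log (m:ℝ)) :=
      mul_nonneg (by linarith) (by nlinarith)
    have hna : (n:ℝ)/α = (n:ℝ) * (1 - t) := by
      rw [ht]; field_simp; ring
    rw [hna]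
    nlinarith
  -- conclude
  have hfin : (1 - (n:ℝ)/α) * Real.log (m:ℝ) + (Real.log (1 - D/n) - Real.log K)
      ≤ Real.log Sig := by linarith
  have hgoalR : Real.log ((1 - D / n) / K) = Real.log (1 - D/n) - Real.log K :=
    Real.log_div hDn'.ne' hK0.ne'
  have hApos : 0 < α / (α - 1) := div_pos hα0 hα1
  have hmul := mul_le_mul_of_nonneg_left hfin hApos.le
  have hco : α / (α - 1) * ((1 - (n:ℝ)/α) * Real.log (m:ℝ) + (Real.log (1 - D/n) - Real.log K))
      = (α - n) / (α - 1) * Real.log (m:ℝ)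
        + α / (α - 1) * (Real.log (1 - D/n) - Real.log K) := by
    field_simp
  rw [ge_iff_le, hgoalR]
  calc (α - ↑n) / (α - 1) * Real.log ↑m
        + α / (α - 1) * (Real.log (1 - D / n) - Real.log K) = _ := hco.symm
    _ ≤ α / (α - 1) * Real.log Sig := hmul
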